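/- Consider the region swap game with n = 4, k = 6, move vectors ρ1 = (1,1,0,0), ρ2 = (1,1,0,0), ρ3 = (1,1,1,1), ρ4 = (0,0,1,1), ρ5 = (0,0,1,1), ρ6 = (1,1,1,1) in (ZMod 2)^4, and winning set W = {v ∈ (ZMod 2)^4 : v_1 + v_2 = 1 and v_3 + v_4 = 1}. Then for every initial state V0 ∈ W, Player C moving second has a winning strategy. -/
import Mathlib


/-- Winning positions for Player C in the region swap game with move vectors
`r : Fin k → Fin n → ZMod 2` and winning set `W`.  The first argument is the number of
turns remaining, `used` is the set of indices already selected, the next argument is the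
current state, and the `Bool` records whether it is Player C's turn to move
(`true` = C to move).  On each turn the player to move selects an unused index `i`
together with a value `ε : ZMod 2`, changing the state by `ε • r i`.  When no turns
remain, Player C has won exactly if the final state lies in `W`. -/
def CWins {k n : ℕ} (r : Fin k → Fin n → ZMod 2) (W : Set (Fin n → ZMod 2)) :
    ℕ → Finset (Fin k) → (Fin n → ZMod 2) → Bool → Prop
  | 0, _, v, _ => v ∈ W
  | m + 1, used, v, true => ∃ i : Fin k, i ∉ used ∧ ∃ ε : ZMod 2,
      CWins r W m (insert i used) (v + ε • r i) false
  | m + 1, used, v, false => ∀ i : Fin k, i ∉ used → ∀ ε : ZMod 2,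
      CWins r W m (insert i used) (v + ε • r i) true

/-- The six region move vectors of the figure-eight knot game board. -/
def fig8Moves : Fin 6 → Fin 4 → ZMod 2 :=
  ![![1, 1, 0, 0], ![1, 1, 0, 0], ![1, 1, 1, 1], ![0, 0, 1, 1], ![0, 0, 1, 1],
    ![1, 1, 1, 1]]

/-- Connected states for the figure-eight board: exactly one of `v 1, v 2` and exactly
one of `v 3, v 4` is on. -/
def fig8W : Set (Fin 4 → ZMod 2) := {v | v 0 + v 1 = 1 ∧ v 2 + v 3 = 1}

instance fig8Wdec : DecidablePred (· ∈ fig8W) := fun v =>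
  inferInstanceAs (Decidable (v 0 + v 1 = 1 ∧ v 2 + v 3 = 1))

instance CWinsDec {k n : ℕ} (r : Fin k → Fin n → ZMod 2) (W : Set (Fin n → ZMod 2))
    [DecidablePred (· ∈ W)] :
    ∀ (m : ℕ) (used : Finset (Fin k)) (v : Fin n → ZMod 2) (b : Bool),
      Decidable (CWins r W m used v b)
  | 0, _, v, _ => inferInstanceAs (Decidable (v ∈ W))
  | m + 1, used, v, true =>
      have := CWinsDec r W m
      inferInstanceAs (Decidable (∃ i : Fin k, i ∉ used ∧ ∃ ε : ZMod 2,
        CWins r W m (insert i used) (v + ε • r i) false))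
  | m + 1, used, v, false =>
      have := CWinsDec r W m
      inferInstanceAs (Decidable (∀ i : Fin k, i ∉ used → ∀ ε : ZMod 2,
        CWins r W m (insert i used) (v + ε • r i) true))

set_option maxRecDepth 10000 in
/-- On the figure-eight knot game board, for every connected initial state, Player C
moving second has a winning strategy in the region swap game. -/
theorem stmt_3 : ∀ V0 ∈ fig8W, CWins fig8Moves fig8W 6 ∅ V0 false := by
  decide
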